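/- Let a₀, a₁, a₂, a₃, b₀, b₁, b₂ be real with a₀ > 0, a₃ > 0 and a₀x⁶ + a₁x⁴ + a₂x² + a₃ > 0 for all real x. Then ∫₀^∞ (b₀z⁴ + b₁z² + b₂)/(a₀z⁶ + a₁z⁴ + a₂z² + a₃) dz = ∫₀^∞ (b₀⁽¹⁾w⁴ + b₁⁽¹⁾w² + b₂⁽¹⁾)/(a₀⁽¹⁾w⁶ + a₁⁽¹⁾w⁴ + a₂⁽¹⁾w² + a₃⁽¹⁾) dw, where b₀⁽¹⁾ = 32(a₃b₀ + a₀b₂), b₁⁽¹⁾ = 8(a₂b₀ + 3a₃b₀ + a₀b₁ + a₃b₁ + 3a₀b₂ + a₁b₂), b₂⁽¹⁾ = 2(a₀+a₁+a₂+a₃)(b₀+b₁+b₂), a₀⁽¹⁾ = 64a₀a₃, a₁⁽¹⁾ = 16(a₀a₂ + 6a₀a₃ + a₁a₃), a₂⁽¹⁾ = 4(a₀a₁ + 4a₀a₂ + a₁a₂ + 9a₀a₃ + 4a₁a₃ + a₂a₃), a₃⁽¹⁾ = (a₀+a₁+a₂+a₃)². -/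

import Mathlib

open MeasureTheory

namespace LandenAux

open Set

/-- Derivative of the Landen map. -/
lemma landen_hasDerivAt (z : ℝ) (hz : z ≠ 0) :
    HasDerivAt (fun z : ℝ => (z ^ 2 - 1) / (2 * z)) ((z ^ 2 + 1) / (2 * z ^ 2)) z := by
  have h1 : HasDerivAt (fun z : ℝ => z ^ 2 - 1) (2 * z) z := by
    simpa using ((hasDerivAt_pow 2 z).sub_const 1)
  have h2 : HasDerivAt (fun z : ℝ => 2 * z) 2 z := by
    simpa using (hasDerivAt_id z).const_mul 2
  have := h1.div h2 (by simpa using hz)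
  refine this.congr_deriv ?_
  rw [div_eq_div_iff (pow_ne_zero 2 (mul_ne_zero two_ne_zero hz))
    (mul_ne_zero two_ne_zero (pow_ne_zero 2 hz))]
  ring

lemma landen_strictMonoOn : StrictMonoOn (fun z : ℝ => (z ^ 2 - 1) / (2 * z)) (Ioi 0) := by
  intro x hx y hy hxy
  simp only [mem_Ioi] at hx hy
  rw [div_lt_div_iff₀ (by linarith) (by linarith)]
  nlinarith [mul_pos hx hy]

lemma landen_surj (w : ℝ) : ∃ z : ℝ, 0 < z ∧ (z ^ 2 - 1) / (2 * z) = w := by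
  set s := Real.sqrt (w ^ 2 + 1) with hs
  have hs2 : s ^ 2 = w ^ 2 + 1 := Real.sq_sqrt (by positivity)
  have hsp : 0 < s := Real.sqrt_pos.mpr (by positivity)
  have hz : 0 < w + s := by
    nlinarith [abs_nonneg w, sq_abs w]
  refine ⟨w + s, hz, ?_⟩
  field_simp
  nlinarith [hs2]

lemma landen_image : (fun z : ℝ => (z ^ 2 - 1) / (2 * z)) '' (Ioi 0) = univ := by
  ext w
  simp only [mem_univ, iff_true, mem_image]
  obtain ⟨z, hz, hzw⟩ := landen_surj w
  exact ⟨z, hz, hzw⟩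

lemma inv_image : (fun z : ℝ => z⁻¹) '' (Ioi 0) = Ioi (0:ℝ) := by
  ext x
  constructor
  · rintro ⟨y, hy, rfl⟩
    simpa using hy
  · intro hx
    exact ⟨x⁻¹, by simpa using hx, inv_inv x⟩

lemma landen_fac (a₀ a₁ a₂ a₃ : ℝ) (z : ℝ) (hz : z ≠ 0) :
    (64 * a₀ * a₃ * ((z ^ 2 - 1) / (2 * z)) ^ 6
      + 16 * (a₀ * a₂ + 6 * a₀ * a₃ + a₁ * a₃) * ((z ^ 2 - 1) / (2 * z)) ^ 4
      + 4 * (a₀ * a₁ + 4 * a₀ * a₂ + a₁ * a₂ + 9 * a₀ * a₃ + 4 * a₁ * a₃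
          + a₂ * a₃) * ((z ^ 2 - 1) / (2 * z)) ^ 2
      + (a₀ + a₁ + a₂ + a₃) ^ 2) * z ^ 6
    = (a₀ * z ^ 6 + a₁ * z ^ 4 + a₂ * z ^ 2 + a₃)
      * (a₃ * z ^ 6 + a₂ * z ^ 4 + a₁ * z ^ 2 + a₀) := by
  field_simp
  ring

set_option maxHeartbeats 2000000 in
/-- The key pointwise identity: the transformed integrand pulled back along the Landen map
equals the sum of the original integrand over the two branches. -/
lemma landen_pointwise (a₀ a₁ a₂ a₃ b₀ b₁ b₂ z : ℝ) (hz : 0 < z)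
    (hQ : a₀ * z ^ 6 + a₁ * z ^ 4 + a₂ * z ^ 2 + a₃ ≠ 0)
    (hQi : a₀ * z⁻¹ ^ 6 + a₁ * z⁻¹ ^ 4 + a₂ * z⁻¹ ^ 2 + a₃ ≠ 0)
    (hR : a₃ * z ^ 6 + a₂ * z ^ 4 + a₁ * z ^ 2 + a₀ ≠ 0) :
    ((z ^ 2 + 1) / (2 * z ^ 2)) *
      ((32 * (a₃ * b₀ + a₀ * b₂) * ((z ^ 2 - 1) / (2 * z)) ^ 4
        + 8 * (a₂ * b₀ + 3 * a₃ * b₀ + a₀ * b₁ + a₃ * b₁ + 3 * a₀ * b₂ + a₁ * b₂)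
          * ((z ^ 2 - 1) / (2 * z)) ^ 2
        + 2 * (a₀ + a₁ + a₂ + a₃) * (b₀ + b₁ + b₂)) /
      (64 * a₀ * a₃ * ((z ^ 2 - 1) / (2 * z)) ^ 6
        + 16 * (a₀ * a₂ + 6 * a₀ * a₃ + a₁ * a₃) * ((z ^ 2 - 1) / (2 * z)) ^ 4
        + 4 * (a₀ * a₁ + 4 * a₀ * a₂ + a₁ * a₂ + 9 * a₀ * a₃ + 4 * a₁ * a₃
            + a₂ * a₃) * ((z ^ 2 - 1) / (2 * z)) ^ 2
        + (a₀ + a₁ + a₂ + a₃) ^ 2))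
    = (b₀ * z ^ 4 + b₁ * z ^ 2 + b₂) /
        (a₀ * z ^ 6 + a₁ * z ^ 4 + a₂ * z ^ 2 + a₃)
      + (z ^ 2)⁻¹ * ((b₀ * z⁻¹ ^ 4 + b₁ * z⁻¹ ^ 2 + b₂) /
        (a₀ * z⁻¹ ^ 6 + a₁ * z⁻¹ ^ 4 + a₂ * z⁻¹ ^ 2 + a₃)) := by
  have hz0 : z ≠ 0 := ne_of_gt hz
  have hz6 : (z:ℝ) ^ 6 ≠ 0 := pow_ne_zero _ hz0
  have hD : (64 * a₀ * a₃ * ((z ^ 2 - 1) / (2 * z)) ^ 6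
        + 16 * (a₀ * a₂ + 6 * a₀ * a₃ + a₁ * a₃) * ((z ^ 2 - 1) / (2 * z)) ^ 4
        + 4 * (a₀ * a₁ + 4 * a₀ * a₂ + a₁ * a₂ + 9 * a₀ * a₃ + 4 * a₁ * a₃
            + a₂ * a₃) * ((z ^ 2 - 1) / (2 * z)) ^ 2
        + (a₀ + a₁ + a₂ + a₃) ^ 2)
      = (a₀ * z ^ 6 + a₁ * z ^ 4 + a₂ * z ^ 2 + a₃)
        * (a₃ * z ^ 6 + a₂ * z ^ 4 + a₁ * z ^ 2 + a₀) / z ^ 6 :=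
    (eq_div_iff hz6).mpr (landen_fac a₀ a₁ a₂ a₃ z hz0)
  have h3 : (z ^ 2)⁻¹ * ((b₀ * z⁻¹ ^ 4 + b₁ * z⁻¹ ^ 2 + b₂) /
        (a₀ * z⁻¹ ^ 6 + a₁ * z⁻¹ ^ 4 + a₂ * z⁻¹ ^ 2 + a₃))
      = (b₂ * z ^ 4 + b₁ * z ^ 2 + b₀) /
        (a₃ * z ^ 6 + a₂ * z ^ 4 + a₁ * z ^ 2 + a₀) := by
    have hQi_eq : a₀ * z⁻¹ ^ 6 + a₁ * z⁻¹ ^ 4 + a₂ * z⁻¹ ^ 2 + a₃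
        = (a₃ * z ^ 6 + a₂ * z ^ 4 + a₁ * z ^ 2 + a₀) / z ^ 6 := by
      field_simp
      ring
    have hPi_eq : b₀ * z⁻¹ ^ 4 + b₁ * z⁻¹ ^ 2 + b₂
        = (b₂ * z ^ 4 + b₁ * z ^ 2 + b₀) / z ^ 4 := by
      field_simp
      ring
    rw [hQi_eq, hPi_eq]
    field_simp
  rw [hD, h3]
  rw [div_add_div _ _ hQ hR, div_div_eq_mul_div, mul_div_assoc',
    div_eq_div_iff (mul_ne_zero hQ hR) (mul_ne_zero hQ hR)]
  field_simp
  ring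

set_option maxHeartbeats 800000 in
/-- Integrability of the integrand on `(0,∞)`. -/
lemma landen_integrable (a₀ a₁ a₂ a₃ b₀ b₁ b₂ : ℝ) (ha₀ : 0 < a₀)
    (hpos : ∀ x : ℝ, 0 < a₀ * x ^ 6 + a₁ * x ^ 4 + a₂ * x ^ 2 + a₃) :
    IntegrableOn (fun z : ℝ => (b₀ * z ^ 4 + b₁ * z ^ 2 + b₂) /
      (a₀ * z ^ 6 + a₁ * z ^ 4 + a₂ * z ^ 2 + a₃)) (Ioi 0) := by
  have hfc : Continuous (fun z : ℝ => (b₀ * z ^ 4 + b₁ * z ^ 2 + b₂) /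
      (a₀ * z ^ 6 + a₁ * z ^ 4 + a₂ * z ^ 2 + a₃)) := by
    apply Continuous.div (by continuity) (by continuity) (fun x => (hpos x).ne')
  set C : ℝ := |a₁| + |a₂| + |a₃| with hC
  set B : ℝ := |b₀| + |b₁| + |b₂| with hB
  set z₀ : ℝ := 1 + Real.sqrt (2 * C / a₀) with hz₀
  have hsq : Real.sqrt (2 * C / a₀) ^ 2 = 2 * C / a₀ :=
    Real.sq_sqrt (by positivity)
  have hz₀1 : 1 ≤ z₀ := by
    have h := Real.sqrt_nonneg (2 * C / a₀); rw [hz₀]; linarith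
  have hz₀0 : (0:ℝ) < z₀ := by linarith
  have h1 : IntegrableOn (fun z : ℝ => (b₀ * z ^ 4 + b₁ * z ^ 2 + b₂) /
      (a₀ * z ^ 6 + a₁ * z ^ 4 + a₂ * z ^ 2 + a₃)) (Ioc 0 z₀) := hfc.integrableOn_Ioc
  have h2 : IntegrableOn (fun z : ℝ => (b₀ * z ^ 4 + b₁ * z ^ 2 + b₂) /
      (a₀ * z ^ 6 + a₁ * z ^ 4 + a₂ * z ^ 2 + a₃)) (Ioi z₀) := by
    have hbase : IntegrableOn (fun z : ℝ => 2 * B / a₀ * z ^ (-2:ℝ)) (Ioi z₀) :=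
      (integrableOn_Ioi_rpow_of_lt (by norm_num) hz₀0).const_mul _
    apply Integrable.mono' hbase hfc.aestronglyMeasurable.restrict
    filter_upwards [ae_restrict_mem measurableSet_Ioi] with z hz
    simp only [mem_Ioi] at hz
    have hz1 : 1 ≤ z := le_trans hz₀1 hz.le
    have hzpos : 0 < z := by linarith
    have h2' : (1:ℝ) ≤ z ^ 2 := by nlinarith
    have h4 : (1:ℝ) ≤ z ^ 4 := by nlinarith
    have h24 : z ^ 2 ≤ z ^ 4 := by nlinarith
    have h40 : (0:ℝ) ≤ z ^ 4 := by positivity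
    have hsqz : 2 * C ≤ a₀ * z ^ 2 := by
      have h' : Real.sqrt (2 * C / a₀) ≤ z := by
        rw [hz₀] at hz; linarith
      have h'' : 2 * C / a₀ ≤ z ^ 2 := by nlinarith [Real.sqrt_nonneg (2 * C / a₀)]
      rw [div_le_iff₀ ha₀] at h''; linarith
    have hQlb : a₀ / 2 * z ^ 6 ≤ a₀ * z ^ 6 + a₁ * z ^ 4 + a₂ * z ^ 2 + a₃ := by
      have e1 : -(C * z ^ 4) ≤ a₁ * z ^ 4 + a₂ * z ^ 2 + a₃ := by
        rw [hC]
        nlinarith [neg_abs_le a₁, neg_abs_le a₂, neg_abs_le a₃,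
          abs_nonneg a₁, abs_nonneg a₂, abs_nonneg a₃]
      have e2 : C * z ^ 4 ≤ a₀ / 2 * z ^ 6 := by
        nlinarith [mul_le_mul_of_nonneg_right hsqz h40]
      nlinarith
    have hPub : |b₀ * z ^ 4 + b₁ * z ^ 2 + b₂| ≤ B * z ^ 4 := by
      rw [abs_le, hB]
      constructor <;>
        nlinarith [le_abs_self b₀, le_abs_self b₁, le_abs_self b₂,
          neg_abs_le b₀, neg_abs_le b₁, neg_abs_le b₂,
          abs_nonneg b₀, abs_nonneg b₁, abs_nonneg b₂]
    have hrpow : z ^ (-2:ℝ) = (z ^ 2)⁻¹ := by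
      rw [Real.rpow_neg hzpos.le]
      congr 1
      rw [show (2:ℝ) = ((2:ℕ):ℝ) by norm_num, Real.rpow_natCast]
    simp only [norm_div, Real.norm_eq_abs, hrpow]
    rw [abs_of_pos (hpos z), div_le_iff₀ (hpos z)]
    calc |b₀ * z ^ 4 + b₁ * z ^ 2 + b₂| ≤ B * z ^ 4 := hPub
      _ = 2 * B / a₀ * (z ^ 2)⁻¹ * (a₀ / 2 * z ^ 6) := by
          field_simp
      _ ≤ 2 * B / a₀ * (z ^ 2)⁻¹ * (a₀ * z ^ 6 + a₁ * z ^ 4 + a₂ * z ^ 2 + a₃) := by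
          gcongr
  have := h1.union h2
  rwa [Ioc_union_Ioi_eq_Ioi hz₀0.le] at this

end LandenAux

open LandenAux

set_option maxHeartbeats 1000000 in
/-- The degree-6 rational Landen transformation preserves the integral over `(0,∞)`. -/
theorem landen_degree_six (a₀ a₁ a₂ a₃ b₀ b₁ b₂ : ℝ)
    (ha₀ : 0 < a₀) (ha₃ : 0 < a₃)
    (hpos : ∀ x : ℝ, 0 < a₀ * x ^ 6 + a₁ * x ^ 4 + a₂ * x ^ 2 + a₃) :
    ∫ z in Set.Ioi (0:ℝ),
        (b₀ * z ^ 4 + b₁ * z ^ 2 + b₂) /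
          (a₀ * z ^ 6 + a₁ * z ^ 4 + a₂ * z ^ 2 + a₃)
      = ∫ w in Set.Ioi (0:ℝ),
          (32 * (a₃ * b₀ + a₀ * b₂) * w ^ 4
            + 8 * (a₂ * b₀ + 3 * a₃ * b₀ + a₀ * b₁ + a₃ * b₁ + 3 * a₀ * b₂ + a₁ * b₂)
              * w ^ 2
            + 2 * (a₀ + a₁ + a₂ + a₃) * (b₀ + b₁ + b₂)) /
          (64 * a₀ * a₃ * w ^ 6
            + 16 * (a₀ * a₂ + 6 * a₀ * a₃ + a₁ * a₃) * w ^ 4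
            + 4 * (a₀ * a₁ + 4 * a₀ * a₂ + a₁ * a₂ + 9 * a₀ * a₃ + 4 * a₁ * a₃
                + a₂ * a₃) * w ^ 2
            + (a₀ + a₁ + a₂ + a₃) ^ 2) := by
  set f : ℝ → ℝ := fun z =>
    (b₀ * z ^ 4 + b₁ * z ^ 2 + b₂) /
      (a₀ * z ^ 6 + a₁ * z ^ 4 + a₂ * z ^ 2 + a₃) with hfdef
  set G : ℝ → ℝ := fun w =>
    (32 * (a₃ * b₀ + a₀ * b₂) * w ^ 4
      + 8 * (a₂ * b₀ + 3 * a₃ * b₀ + a₀ * b₁ + a₃ * b₁ + 3 * a₀ * b₂ + a₁ * b₂)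
        * w ^ 2
      + 2 * (a₀ + a₁ + a₂ + a₃) * (b₀ + b₁ + b₂)) /
    (64 * a₀ * a₃ * w ^ 6
      + 16 * (a₀ * a₂ + 6 * a₀ * a₃ + a₁ * a₃) * w ^ 4
      + 4 * (a₀ * a₁ + 4 * a₀ * a₂ + a₁ * a₂ + 9 * a₀ * a₃ + 4 * a₁ * a₃
          + a₂ * a₃) * w ^ 2
      + (a₀ + a₁ + a₂ + a₃) ^ 2) with hGdef
  -- the Landen map and its derivative
  have hder : ∀ x ∈ Set.Ioi (0:ℝ), HasDerivWithinAt (fun z : ℝ => (z ^ 2 - 1) / (2 * z))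
      ((x ^ 2 + 1) / (2 * x ^ 2)) (Set.Ioi 0) x :=
    fun x hx => (landen_hasDerivAt x (ne_of_gt hx)).hasDerivWithinAt
  have hinj : Set.InjOn (fun z : ℝ => (z ^ 2 - 1) / (2 * z)) (Set.Ioi 0) :=
    landen_strictMonoOn.injOn
  -- change of variables for G along the Landen map
  have key := integral_image_eq_integral_abs_deriv_smul measurableSet_Ioi hder hinj G
  rw [landen_image, Measure.restrict_univ] at key
  have keyiff := integrableOn_image_iff_integrableOn_abs_deriv_smul
    measurableSet_Ioi hder hinj G
  rw [landen_image] at keyiff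
  -- change of variables for f along the inversion
  have hderi : ∀ x ∈ Set.Ioi (0:ℝ), HasDerivWithinAt (fun z : ℝ => z⁻¹)
      (-(x ^ 2)⁻¹) (Set.Ioi 0) x :=
    fun x hx => (hasDerivAt_inv (ne_of_gt hx)).hasDerivWithinAt
  have hinji : Set.InjOn (fun z : ℝ => z⁻¹) (Set.Ioi 0) :=
    fun a _ b _ h => inv_injective h
  have key2 := integral_image_eq_integral_abs_deriv_smul measurableSet_Ioi hderi hinji f
  rw [inv_image] at key2
  have key2iff := integrableOn_image_iff_integrableOn_abs_deriv_smul
    measurableSet_Ioi hderi hinji f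
  rw [inv_image] at key2iff
  -- integrability
  have hfint : IntegrableOn f (Set.Ioi 0) :=
    landen_integrable a₀ a₁ a₂ a₃ b₀ b₁ b₂ ha₀ hpos
  have hhint : IntegrableOn (fun x : ℝ => |(-(x ^ 2)⁻¹)| • f x⁻¹) (Set.Ioi 0) :=
    key2iff.mp hfint
  -- the pointwise identity
  have hptw : ∀ z ∈ Set.Ioi (0:ℝ),
      |(z ^ 2 + 1) / (2 * z ^ 2)| • G ((z ^ 2 - 1) / (2 * z))
        = f z + |(-(z ^ 2)⁻¹)| • f z⁻¹ := by
    intro z hz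
    simp only [Set.mem_Ioi] at hz
    have hz0 : z ≠ 0 := ne_of_gt hz
    have hQ : a₀ * z ^ 6 + a₁ * z ^ 4 + a₂ * z ^ 2 + a₃ ≠ 0 := (hpos z).ne'
    have hQi : a₀ * z⁻¹ ^ 6 + a₁ * z⁻¹ ^ 4 + a₂ * z⁻¹ ^ 2 + a₃ ≠ 0 := (hpos z⁻¹).ne'
    have hRpos : 0 < a₃ * z ^ 6 + a₂ * z ^ 4 + a₁ * z ^ 2 + a₀ := by
      have h := mul_pos (hpos z⁻¹) (pow_pos hz 6)
      have e : (a₀ * z⁻¹ ^ 6 + a₁ * z⁻¹ ^ 4 + a₂ * z⁻¹ ^ 2 + a₃) * z ^ 6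
          = a₃ * z ^ 6 + a₂ * z ^ 4 + a₁ * z ^ 2 + a₀ := by
        field_simp
        ring
      rwa [e] at h
    have habs1 : |(z ^ 2 + 1) / (2 * z ^ 2)| = (z ^ 2 + 1) / (2 * z ^ 2) :=
      abs_of_pos (by positivity)
    have habs2 : |(-(z ^ 2)⁻¹)| = (z ^ 2)⁻¹ := by
      rw [abs_neg, abs_of_pos (by positivity)]
    rw [habs1, habs2, smul_eq_mul, smul_eq_mul, hGdef, hfdef]
    exact landen_pointwise a₀ a₁ a₂ a₃ b₀ b₁ b₂ z hz hQ hQi hRpos.ne'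
  -- integrability of the pulled-back integrand, hence of G
  have hgint : IntegrableOn
      (fun x : ℝ => |(x ^ 2 + 1) / (2 * x ^ 2)| • G ((x ^ 2 - 1) / (2 * x)))
      (Set.Ioi 0) := by
    have hsum : IntegrableOn (fun x : ℝ => f x + |(-(x ^ 2)⁻¹)| • f x⁻¹)
        (Set.Ioi 0) := hfint.add hhint
    exact IntegrableOn.congr_fun hsum (fun z hz => (hptw z hz).symm) measurableSet_Ioi
  have hGint : Integrable G := integrableOn_univ.mp (keyiff.mpr hgint)
  -- evenness of G
  have hev : ∀ x : ℝ, G (-x) = G x := by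
    intro x
    rw [hGdef]
    ring_nf
  have hneg : ∫ x in Set.Iic (0:ℝ), G x = ∫ x in Set.Ioi (0:ℝ), G x := by
    have h := integral_comp_neg_Ioi (0:ℝ) G
    rw [neg_zero] at h
    rw [← h]
    exact setIntegral_congr_fun measurableSet_Ioi fun x _ => (hev x).symm ▸ rfl
  -- splitting the real line
  have hsplit : (∫ x in Set.Iic (0:ℝ), G x) + ∫ x in Set.Ioi (0:ℝ), G x = ∫ x, G x :=
    intervalIntegral.integral_Iic_add_Ioi hGint.integrableOn hGint.integrableOn
  -- compute the full integral of G
  have hcomp : ∫ x, G x = (∫ z in Set.Ioi (0:ℝ), f z) + ∫ z in Set.Ioi (0:ℝ), f z := by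
    rw [key]
    rw [setIntegral_congr_fun measurableSet_Ioi hptw]
    rw [integral_add hfint hhint]
    rw [← key2]
  have : (∫ x in Set.Ioi (0:ℝ), G x) + ∫ x in Set.Ioi (0:ℝ), G x
      = (∫ z in Set.Ioi (0:ℝ), f z) + ∫ z in Set.Ioi (0:ℝ), f z := by
    rw [← hcomp, ← hsplit, hneg]
  linarith
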